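/- Let q = 2^k for a positive integer k. A function f : F_q → F_q is a sign preserver on M_2(F_q) if and only if f is a bijective monomial, i.e., there exist c ∈ F_q with c ≠ 0 and an integer n with 1 ≤ n ≤ q−1 and gcd(n, q−1) = 1 such that f(x) = c·x^n for all x ∈ F_q. -/

import Mathlib

/-- An element of a field is *positive* if it is a nonzero square. -/
def IsPos {F : Type*} [Field F] (x : F) : Prop := ∃ y : F, y ≠ 0 ∧ y ^ 2 = x

/-- The `r`-th leading principal minor of a square matrix (the determinant of the
top-left `(r+1) × (r+1)` submatrix). -/
def leadingMinor {F : Type*} [CommRing F] {n : ℕ} (A : Matrix (Fin n) (Fin n) F)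
    (r : Fin n) : F :=
  (A.submatrix (Fin.castLE r.isLt) (Fin.castLE r.isLt)).det

/-- A matrix over a finite field is positive definite if it is symmetric and all its
leading principal minors are positive (nonzero squares). -/
def IsPosDef {F : Type*} [Field F] {n : ℕ} (A : Matrix (Fin n) (Fin n) F) : Prop :=
  A.IsSymm ∧ ∀ r : Fin n, IsPos (leadingMinor A r)

/-- The entrywise application `f[A]` of `f` to the matrix `A`. -/
def entrywiseMap {F : Type*} {n : ℕ} (f : F → F) (A : Matrix (Fin n) (Fin n) F) :
    Matrix (Fin n) (Fin n) F := Matrix.of fun i j => f (A i j)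

/-- `f` preserves positivity on `n × n` matrices. -/
def PreservesPos {F : Type*} [Field F] (n : ℕ) (f : F → F) : Prop :=
  ∀ A : Matrix (Fin n) (Fin n) F, IsPosDef A → IsPosDef (entrywiseMap f A)

/-- `f` is a sign preserver on `M_n(F)`: for every symmetric `A`, `A` is positive
definite iff `f[A]` is positive definite. -/
def SignPreserver {F : Type*} [Field F] (n : ℕ) (f : F → F) : Prop :=
  ∀ A : Matrix (Fin n) (Fin n) F, A.IsSymm → (IsPosDef A ↔ IsPosDef (entrywiseMap f A))

/-! ### Auxiliary development -/

set_option linter.unusedSectionVars false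

/-- The elementary "sign preserving" condition extracted from `SignPreserver 2`. -/
def SP {F : Type*} [Field F] (f : F → F) : Prop :=
  ∀ a b d : F, (a ≠ 0 ∧ a * d - b * b ≠ 0) ↔ (f a ≠ 0 ∧ f a * f d - f b * f b ≠ 0)

section aux
variable {F : Type*} [Field F] [Fintype F] {f : F → F}

lemma char2 (k : ℕ) (hcard : Fintype.card F = 2 ^ k) : (2 : F) = 0 := by
  haveI := ringChar.charP F
  obtain ⟨m, hp, hc⟩ := FiniteField.card F (ringChar F)
  have hdvd : ringChar F ∣ 2 ^ k := by
    rw [← hcard, hc]; exact dvd_pow_self _ (by exact_mod_cast m.ne_zero)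
  have h2 : ringChar F = 2 :=
    (Nat.prime_dvd_prime_iff_eq hp Nat.prime_two).mp (hp.dvd_of_dvd_pow hdvd)
  have := (ringChar.spec F 2).mpr (h2 ▸ dvd_refl _)
  exact_mod_cast this

lemma sq_inj (h2 : (2:F) = 0) : Function.Injective (fun x : F => x ^ 2) := by
  intro x y h
  simp only at h
  have key : (x - y) ^ 2 = 0 := by linear_combination h + (y^2 - x*y) * h2
  have := pow_eq_zero_iff (n := 2) (by norm_num) |>.mp key
  exact sub_eq_zero.mp this

lemma sq_surj' (h2 : (2:F) = 0) : Function.Surjective (fun x : F => x ^ 2) :=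
  Finite.injective_iff_surjective.mp (sq_inj h2)

lemma isPos_iff (h2 : (2:F) = 0) (x : F) : IsPos x ↔ x ≠ 0 := by
  constructor
  · rintro ⟨y, hy, rfl⟩; exact pow_ne_zero _ hy
  · intro hx
    obtain ⟨y, hy⟩ := sq_surj' h2 x
    exact ⟨y, fun h => hx (by simp [← hy, h]), hy⟩

lemma leadingMinor_zero (A : Matrix (Fin 2) (Fin 2) F) : leadingMinor A 0 = A 0 0 := by
  simp [leadingMinor, Matrix.det_fin_one]

lemma leadingMinor_one (A : Matrix (Fin 2) (Fin 2) F) :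
    leadingMinor A 1 = A 0 0 * A 1 1 - A 0 1 * A 1 0 := by
  rw [leadingMinor, Matrix.det_fin_two]
  rfl

lemma isPosDef_iff (h2 : (2:F) = 0) (A : Matrix (Fin 2) (Fin 2) F) :
    IsPosDef A ↔ A.IsSymm ∧ A 0 0 ≠ 0 ∧ A 0 0 * A 1 1 - A 0 1 * A 1 0 ≠ 0 := by
  rw [IsPosDef, Fin.forall_fin_two, leadingMinor_zero, leadingMinor_one,
    isPos_iff h2, isPos_iff h2]

lemma symm_two (a b d : F) : (!![a, b; b, d] : Matrix (Fin 2) (Fin 2) F).IsSymm := by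
  rw [Matrix.IsSymm]
  ext i j
  fin_cases i <;> fin_cases j <;> rfl

lemma entrywise_two (f : F → F) (a b d : F) :
    entrywiseMap f !![a, b; b, d] = !![f a, f b; f b, f d] := by
  ext i j
  fin_cases i <;> fin_cases j <;> rfl

lemma sp_of_signPreserver (h2 : (2:F) = 0) (hf : SignPreserver 2 f) : SP f := by
  intro a b d
  have := hf !![a, b; b, d] (symm_two a b d)
  rw [entrywise_two, isPosDef_iff h2, isPosDef_iff h2] at this
  simpa [symm_two] using this

lemma pow_congr' {x : F} (hx : x ≠ 0) {a b : ℕ}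
    (h : a ≡ b [MOD Fintype.card F - 1]) : x ^ a = x ^ b := by
  classical
  lift x to Fˣ using isUnit_iff_ne_zero.mpr hx
  have hdvd : orderOf x ∣ Fintype.card F - 1 := by
    rw [← Fintype.card_units]; exact orderOf_dvd_card
  have : x ^ a = x ^ b := pow_eq_pow_iff_modEq.mpr (h.of_dvd hdvd)
  exact_mod_cast congrArg (Units.val) this

lemma pow_inj_of_coprime {n : ℕ} (hn : 1 ≤ n)
    (hg : Nat.gcd n (Fintype.card F - 1) = 1) :
    Function.Injective (fun x : F => x ^ n) := by
  set N := Fintype.card F - 1 with hN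
  intro x y h
  simp only at h
  by_cases hx : x = 0
  · subst hx
    rw [zero_pow (by omega), eq_comm, pow_eq_zero_iff (by omega)] at h
    exact h.symm
  by_cases hy : y = 0
  · subst hy
    rw [zero_pow (by omega), pow_eq_zero_iff (by omega)] at h
    exact h
  have hN1 : 1 ≤ N := by
    have : 2 ≤ Fintype.card F := Fintype.one_lt_card
    omega
  rcases eq_or_lt_of_le hN1 with hE | hE
  · have hmod : n ≡ 1 [MOD N] := by
      rw [← hE]; exact Nat.modEq_one
    calc x = x ^ 1 := (pow_one x).symm
      _ = x ^ n := pow_congr' hx hmod.symm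
      _ = y ^ n := h
      _ = y ^ 1 := pow_congr' hy hmod
      _ = y := pow_one y
  · obtain ⟨m, -, hm⟩ := Nat.exists_mul_mod_eq_one_of_coprime hg hE
    have hmod : n * m ≡ 1 [MOD N] := by
      unfold Nat.ModEq
      rw [hm, Nat.mod_eq_of_lt hE]
    calc x = x ^ 1 := (pow_one x).symm
      _ = x ^ (n * m) := pow_congr' hx hmod.symm
      _ = (x ^ n) ^ m := by rw [pow_mul]
      _ = (y ^ n) ^ m := by rw [h]
      _ = y ^ (n * m) := by rw [pow_mul]
      _ = y ^ 1 := pow_congr' hy hmod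
      _ = y := pow_one y

lemma f_ne (hf : SP f) {a : F} (ha : a ≠ 0) : f a ≠ 0 := by
  have := (hf a 1 0).mp ⟨ha, by simp⟩
  exact this.1

lemma f_zero (h2 : (2:F) = 0) (hf : SP f) : f 0 = 0 := by
  by_contra h0
  have hall : ∀ b d : F, f 0 * f d = f b * f b := by
    intro b d
    have := (hf 0 b d)
    simp only [ne_eq, not_true_eq_false, false_and, false_iff, not_and, not_not] at this
    exact sub_eq_zero.mp (this h0)
  have hconst : ∀ b : F, f b = f 0 := by
    intro b
    have h1 := hall b 0
    have hz := hall 0 0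
    have : f b * f b = f 0 * f 0 := by rw [← h1, hz]
    by_contra hne
    have : (f b - f 0) * (f b + f 0) = 0 := by ring_nf; linear_combination this
    rcases mul_eq_zero.mp this with h | h
    · exact hne (sub_eq_zero.mp h)
    · exact hne (by linear_combination h - f 0 * h2)
  have := (hf 1 0 1).mp ⟨one_ne_zero, by simp [f_ne hf one_ne_zero]⟩
  rw [hconst 1, hconst 0] at this
  exact this.2 (by ring)

lemma step3 (hf : SP f) {a : F} (ha : a ≠ 0) (b d : F) :
    a * d = b * b ↔ f a * f d = f b * f b := by
  have h := hf a b d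
  rw [and_iff_right ha, and_iff_right (f_ne hf ha)] at h
  rw [← sub_eq_zero, ← sub_eq_zero (a := f a * f d)]
  exact not_iff_not.mp (by simpa using h)

lemma mult (h2 : (2:F) = 0) (hf : SP f) (a d : F) :
    f 1 * f (a * d) = f a * f d := by
  by_cases ha : a = 0
  · simp [ha, f_zero h2 hf]
  obtain ⟨b, hb⟩ := sq_surj' h2 (a * d)
  simp only at hb
  have h1 : f a * f d = f b * f b := (step3 hf ha b d).mp (by rw [← hb]; ring)
  have h2' : f 1 * f (a * d) = f b * f b :=
    (step3 hf one_ne_zero b (a * d)).mp (by rw [← hb]; ring)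
  rw [h2', h1]

lemma f_inj (h2 : (2:F) = 0) (hf : SP f) : Function.Injective f := by
  intro x y h
  by_cases hx : x = 0
  · subst hx
    by_contra hy
    exact f_ne hf (Ne.symm hy) ((f_zero h2 hf) ▸ h).symm
  by_cases hy : y = 0
  · subst hy
    exact absurd (h.trans (f_zero h2 hf)) (f_ne hf hx)
  obtain ⟨b, hb⟩ := sq_surj' h2 (x * y)
  simp only at hb
  have key : f x * f x = f b * f b := by
    have h1 : f 1 * f (x * y) = f x * f y := mult h2 hf x y
    have h3 : f 1 * f (b * b) = f b * f b := mult h2 hf b b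
    have hxx : f x * f x = f 1 * f (x*y) := by rw [h1, h]
    have hb2 : x * y = b * b := by rw [← hb]; ring
    rw [hxx, hb2, h3]
  have := (step3 hf hx b x).mpr key
  have hxy : x * x = x * y := by rw [this, ← hb]; ring
  exact mul_left_cancel₀ hx hxy

lemma exists_monomial (h2 : (2:F) = 0) (hf : SP f) :
    ∃ (c : F) (n : ℕ), c ≠ 0 ∧ 1 ≤ n ∧ n ≤ Fintype.card F - 1 ∧
      Nat.gcd n (Fintype.card F - 1) = 1 ∧ ∀ x : F, f x = c * x ^ n := by
  classical
  set N := Fintype.card F - 1 with hNdef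
  have hcard2 : 2 ≤ Fintype.card F := Fintype.one_lt_card
  have hN1 : 1 ≤ N := by omega
  set c := f 1 with hc
  have hc0 : c ≠ 0 := f_ne hf one_ne_zero
  obtain ⟨ζ, hζ⟩ := IsCyclic.exists_generator (α := Fˣ)
  have hcardU : Fintype.card Fˣ = N := by rw [Fintype.card_units]
  have hord : orderOf ζ = N := by
    rw [orderOf_eq_card_of_forall_mem_zpowers hζ, Nat.card_eq_fintype_card, hcardU]
  have hfζ : f (ζ:F) ≠ 0 := f_ne hf (Units.ne_zero ζ)
  set w : F := c⁻¹ * f (ζ:F) with hw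
  have hw0 : w ≠ 0 := mul_ne_zero (inv_ne_zero hc0) hfζ
  have hind : ∀ m : ℕ, f ((ζ:F) ^ m) = c * w ^ m := by
    intro m
    induction m with
    | zero => simp [hc]
    | succ m ih =>
      have hm := mult h2 hf (ζ:F) ((ζ:F)^m)
      have e1 : (ζ:F)^(m+1) = (ζ:F) * (ζ:F)^m := by rw [pow_succ]; ring
      rw [e1]
      have : f ((ζ:F) * (ζ:F)^m) = c⁻¹ * (f (ζ:F) * f ((ζ:F)^m)) := by
        field_simp
        linear_combination hm
      rw [this, ih, hw]
      field_simp
      rw [pow_succ, mul_comm c, mul_assoc, div_mul_cancel₀ _ hc0, mul_comm]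
  obtain ⟨n0, hn0⟩ := (Submonoid.mem_powers_iff _ _).mp
    (mem_powers_iff_mem_zpowers.mpr (hζ (Units.mk0 w hw0)))
  have hwpow : w = (ζ:F) ^ n0 := by
    have := congrArg Units.val hn0
    simpa using this.symm
  have hfx : ∀ x : F, x ≠ 0 → f x = c * x ^ n0 := by
    intro x hx
    lift x to Fˣ using isUnit_iff_ne_zero.mpr hx
    obtain ⟨m, hm⟩ := (Submonoid.mem_powers_iff _ _).mp
      (mem_powers_iff_mem_zpowers.mpr (hζ x))
    have hxv : (x:F) = (ζ:F)^m := by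
      have := congrArg Units.val hm
      simpa using this.symm
    rw [hxv, hind m, hwpow, ← pow_mul, ← pow_mul, Nat.mul_comm]
  have hpinj : Function.Injective (fun u : Fˣ => u ^ n0) := by
    intro u v huv
    simp only at huv
    have hval : (u:F) ^ n0 = (v:F) ^ n0 := by exact_mod_cast congrArg Units.val huv
    have : f (u:F) = f (v:F) := by
      rw [hfx _ (Units.ne_zero u), hfx _ (Units.ne_zero v), hval]
    exact Units.ext (f_inj h2 hf this)
  obtain ⟨u, hu⟩ := Finite.injective_iff_surjective.mp hpinj ζ
  simp only at hu
  obtain ⟨m, hm⟩ := (Submonoid.mem_powers_iff _ _).mp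
    (mem_powers_iff_mem_zpowers.mpr (hζ u))
  have hmod : m * n0 ≡ 1 [MOD N] := by
    rw [← hord]
    exact pow_eq_pow_iff_modEq.mp (by rw [pow_mul, hm, hu, pow_one])
  have hgcd : Nat.gcd n0 N = 1 := by
    have d1 : ((Nat.gcd n0 N : ℕ) : ℤ) ∣ ((m * n0 : ℕ) : ℤ) :=
      Int.natCast_dvd_natCast.mpr ((Nat.gcd_dvd_left _ _).mul_left m)
    have d2 : ((Nat.gcd n0 N : ℕ) : ℤ) ∣ ((1:ℕ) : ℤ) - ((m * n0 : ℕ) : ℤ) :=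
      dvd_trans (Int.natCast_dvd_natCast.mpr (Nat.gcd_dvd_right _ _)) hmod.dvd
    have : ((Nat.gcd n0 N : ℕ) : ℤ) ∣ ((1:ℕ) : ℤ) := by
      have := dvd_add d2 d1
      simpa using this
    exact Nat.dvd_one.mp (Int.natCast_dvd_natCast.mp this)
  by_cases h0 : n0 % N = 0
  · have hNdvd : N ∣ n0 := Nat.dvd_of_mod_eq_zero h0
    have hNone : N = 1 := Nat.dvd_one.mp (hgcd ▸ Nat.dvd_gcd hNdvd dvd_rfl)
    refine ⟨c, 1, hc0, le_refl 1, by omega, by simp, ?_⟩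
    intro x
    by_cases hx : x = 0
    · simp [hx, f_zero h2 hf]
    · rw [hfx x hx,
        pow_congr' hx (a := n0) (b := 1) (by rw [← hNdef, hNone]; exact Nat.modEq_one)]
  · refine ⟨c, n0 % N, hc0, by omega, le_of_lt (Nat.mod_lt _ (by omega)), ?_, ?_⟩
    · rw [← Nat.gcd_rec, Nat.gcd_comm, hgcd]
    · intro x
      by_cases hx : x = 0
      · simp [hx, f_zero h2 hf, zero_pow (by omega : n0 % N ≠ 0)]
      · rw [hfx x hx, pow_congr' hx (a := n0) (b := n0 % N) (Nat.mod_modEq n0 N).symm]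

lemma signPreserver_of_monomial (h2 : (2:F) = 0) {c : F} {n : ℕ} (hc0 : c ≠ 0)
    (hn : 1 ≤ n) (hgcd : Nat.gcd n (Fintype.card F - 1) = 1)
    (hfx : ∀ x : F, f x = c * x ^ n) : SignPreserver 2 f := by
  have hinj := pow_inj_of_coprime hn hgcd (F := F)
  have fa_iff : ∀ a : F, (c * a ^ n ≠ 0) ↔ a ≠ 0 := by
    intro a
    constructor
    · intro h ha
      exact h (by rw [ha, zero_pow (by omega : n ≠ 0), mul_zero])
    · intro ha
      exact mul_ne_zero hc0 (pow_ne_zero _ ha)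
  have main : ∀ a b d : F,
      ((c * a ^ n) * (c * d ^ n) - (c * b ^ n) * (c * b ^ n) ≠ 0) ↔ (a * d - b * b ≠ 0) := by
    intro a b d
    have key : (c * a ^ n) * (c * d ^ n) - (c * b ^ n) * (c * b ^ n)
        = (c * c) * ((a * d) ^ n - (b * b) ^ n) := by
      rw [mul_pow, mul_pow]; ring
    rw [key, mul_ne_zero_iff, and_iff_right (mul_ne_zero hc0 hc0), sub_ne_zero, sub_ne_zero]
    exact not_congr ⟨fun h => hinj h, fun h => by rw [h]⟩
  intro A hA
  rw [isPosDef_iff h2, isPosDef_iff h2]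
  have hAs : ∀ i j, A j i = A i j := fun i j => hA.apply i j
  have hsymm' : (entrywiseMap f A).IsSymm := by
    apply Matrix.IsSymm.ext
    intro i j
    show f (A j i) = f (A i j)
    rw [hAs i j]
  have e : ∀ i j, entrywiseMap f A i j = f (A i j) := fun _ _ => rfl
  rw [and_iff_right hA, and_iff_right hsymm', e, e, e, e]
  rw [hAs 0 1, hfx (A 0 0), hfx (A 0 1), hfx (A 1 1)]
  rw [main, fa_iff]

end aux

/-- over `F = 𝔽_{2^k}`, `f` is a sign preserver on `M_2(F)` iff `f` is a
bijective monomial, i.e. `f x = c x^n` with `c ≠ 0`, `1 ≤ n ≤ q − 1`, `gcd(n, q−1) = 1`. -/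
theorem stmt8 {F : Type*} [Field F] [Fintype F] (k : ℕ) (hk : 1 ≤ k)
    (hcard : Fintype.card F = 2 ^ k) (f : F → F) :
    SignPreserver 2 f ↔
      ∃ (c : F) (n : ℕ), c ≠ 0 ∧ 1 ≤ n ∧ n ≤ 2 ^ k - 1 ∧ Nat.gcd n (2 ^ k - 1) = 1 ∧
        ∀ x : F, f x = c * x ^ n := by
  have h2 : (2:F) = 0 := char2 k hcard
  have hq : Fintype.card F - 1 = 2 ^ k - 1 := by rw [hcard]
  constructor
  · intro hf
    obtain ⟨c, n, hc0, hn1, hnle, hgcd, hfx⟩ :=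
      exists_monomial h2 (sp_of_signPreserver h2 hf)
    exact ⟨c, n, hc0, hn1, hq ▸ hnle, hq ▸ hgcd, hfx⟩
  · rintro ⟨c, n, hc0, hn1, _, hgcd, hfx⟩
    exact signPreserver_of_monomial h2 hc0 hn1 (by rw [hq]; exact hgcd) hfx
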